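/- Let F be a finite concave set of collinear circles with closure operator ch. Then every nonempty closed set X of (F,ch) equals the horizontal interval [A,B], where A ∈ X has the least left end and B ∈ X has the greatest right end among circles of X. Consequently the lattice of closed sets equals {∅} ∪ {[A,B] : A,B ∈ F}. -/

import Mathlib

/-- A collinear circle: a circle in the plane whose center `(u,0)` lies on the x-axis,
with radius `r ≥ 0`. -/
structure CC where
  u : ℝ
  r : ℝ
  hr : 0 ≤ r

/-- The point set of a collinear circle. -/
def CC.pts (C : CC) : Set (ℝ × ℝ) := {p : ℝ × ℝ | (p.1 - C.u) ^ 2 + p.2 ^ 2 = C.r ^ 2}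

/-- Leftmost point (x-coordinate). -/
def CC.lmpt (C : CC) : ℝ := C.u - C.r

/-- Rightmost point (x-coordinate). -/
def CC.rmpt (C : CC) : ℝ := C.u + C.r

/-- `lend C ⊑ lend D` for the lexicographic order on left ends `(ℓ(C), -r(C))`. -/
def lendLe (C D : CC) : Prop := C.lmpt < D.lmpt ∨ (C.lmpt = D.lmpt ∧ D.r ≤ C.r)

/-- `rend C ⊑ rend D` for the lexicographic order on right ends `(ρ(C), r(C))`. -/
def rendLe (C D : CC) : Prop := C.rmpt < D.rmpt ∨ (C.rmpt = D.rmpt ∧ C.r ≤ D.r)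

/-- The closure operator: `ch F X = {C ∈ F : C ⊆ conv(⋃_{D ∈ X} D)}`. -/
def ch (F X : Set CC) : Set CC :=
  {C | C ∈ F ∧ C.pts ⊆ convexHull ℝ (⋃ D ∈ X, CC.pts D)}

/-- The horizontal interval `[A,B] = {C ∈ F : lend A ⊑ lend C, rend C ⊑ rend B}`. -/
def hInt (F : Set CC) (A B : CC) : Set CC :=
  {C | C ∈ F ∧ lendLe A C ∧ rendLe C B}

/-- `F` is a concave set of collinear circles. -/
def ConcaveF (F : Set CC) : Prop :=
  ∀ C₁ ∈ F, ∀ C₂ ∈ F, ∀ C₃ ∈ F, lendLe C₁ C₂ → rendLe C₂ C₃ →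
    C₂.pts ⊆ convexHull ℝ (C₁.pts ∪ C₃.pts)

lemma CC.left_mem_pts (C : CC) : ((C.u - C.r, 0) : ℝ × ℝ) ∈ C.pts := by
  simp [CC.pts]

lemma CC.right_mem_pts (C : CC) : ((C.u + C.r, 0) : ℝ × ℝ) ∈ C.pts := by
  simp [CC.pts]

lemma exists_zeta (A : CC) (m : ℝ) (Y : Set CC) (hY : Y.Finite) :
    ∃ ζ > (0:ℝ), ∀ D ∈ Y, m < D.u - D.r → A.u < D.u →
      ζ * (D.u - A.u) ≤ (D.u - D.r) - m := by
  refine Set.Finite.induction_on (motive := fun Y _ => ∃ ζ > (0:ℝ), ∀ D ∈ Y, m < D.u - D.r → A.u < D.u →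
      ζ * (D.u - A.u) ≤ (D.u - D.r) - m) Y hY ⟨1, one_pos, by simp⟩ ?_
  intro D₀ Z _ _ ih
  obtain ⟨ζ, hζ0, hζ⟩ := ih
  by_cases h : m < D₀.u - D₀.r ∧ A.u < D₀.u
  · refine ⟨min ζ (((D₀.u - D₀.r) - m) / (D₀.u - A.u)), ?_, ?_⟩
    · exact lt_min hζ0 (div_pos (by linarith [h.1]) (by linarith [h.2]))
    · rintro D (rfl|hD) h1 h2
      · calc min ζ (((D.u - D.r) - m) / (D.u - A.u)) * (D.u - A.u)
            ≤ (((D.u - D.r) - m) / (D.u - A.u)) * (D.u - A.u) := by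
              apply mul_le_mul_of_nonneg_right (min_le_right _ _) (by linarith)
        _ = (D.u - D.r) - m := div_mul_cancel₀ _ (by linarith)
      · exact le_trans (mul_le_mul_of_nonneg_right (min_le_left _ _) (by linarith)) (hζ D hD h1 h2)
  · refine ⟨ζ, hζ0, ?_⟩
    rintro D (rfl|hD) h1 h2
    · exact absurd ⟨h1, h2⟩ h
    · exact hζ D hD h1 h2

lemma sub_sqrt_mul_le (c ε : ℝ) (hc : 0 < c) (hε0 : 0 < ε) (hεc : ε ≤ c) :
    (c - Real.sqrt (c^2 - ε^2)) * (2*c - ε) ≤ ε^2 := by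
  have hσ0 : 0 ≤ Real.sqrt (c^2 - ε^2) := Real.sqrt_nonneg _
  have hσsq : (Real.sqrt (c^2 - ε^2))^2 = c^2 - ε^2 := Real.sq_sqrt (by nlinarith)
  have hσge : c - ε ≤ Real.sqrt (c^2 - ε^2) := by nlinarith
  have hσle : Real.sqrt (c^2 - ε^2) ≤ c := by nlinarith
  nlinarith [mul_nonneg (show (0:ℝ) ≤ c - Real.sqrt (c^2 - ε^2) by linarith)
    (show (0:ℝ) ≤ Real.sqrt (c^2 - ε^2) - (c - ε) by linarith)]

lemma sqrt_le_c (c ε : ℝ) (hc : 0 < c) (hε0 : 0 < ε) (hεc : ε ≤ c) :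
    Real.sqrt (c^2 - ε^2) ≤ c := by
  have hσ0 : 0 ≤ Real.sqrt (c^2 - ε^2) := Real.sqrt_nonneg _
  have hσsq : (Real.sqrt (c^2 - ε^2))^2 = c^2 - ε^2 := Real.sq_sqrt (by nlinarith)
  nlinarith

set_option maxHeartbeats 2000000 in
lemma keyL (A C : CC) (Y : Set CC) (hYfin : Y.Finite)
    (hle : ∀ D ∈ Y, lendLe A D)
    (hC : C.pts ⊆ convexHull ℝ (⋃ D ∈ Y, CC.pts D)) : lendLe A C := by
  have hfst : IsLinearMap ℝ (fun p : ℝ × ℝ => p.1) := ⟨fun x y => rfl, fun c x => rfl⟩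
  -- Step 1 : everything lies right of the line x = A.u - A.r
  have h1 : convexHull ℝ (⋃ D ∈ Y, CC.pts D) ⊆ {p : ℝ × ℝ | A.u - A.r ≤ p.1} := by
    apply convexHull_min _ (convex_halfSpace_ge hfst (A.u - A.r))
    intro p hp
    simp only [Set.mem_iUnion] at hp
    obtain ⟨D, hD, hpD⟩ := hp
    have hlm : A.u - A.r ≤ D.u - D.r := by
      rcases hle D hD with h | ⟨h, _⟩
      · exact le_of_lt h
      · exact le_of_eq h
    have hpD' : (p.1 - D.u)^2 + p.2^2 = D.r^2 := hpD
    have : D.u - D.r ≤ p.1 := by nlinarith [sq_nonneg p.2, sq_nonneg (p.1 - D.u + D.r), D.hr]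
    show A.u - A.r ≤ p.1
    linarith
  have hml : A.u - A.r ≤ C.u - C.r := h1 (hC (CC.left_mem_pts C))
  rcases lt_or_eq_of_le hml with hlt | heq
  · exact Or.inl hlt
  by_cases hrle : C.r ≤ A.r
  · exact Or.inr ⟨heq, hrle⟩
  exfalso
  push_neg at hrle
  have hR0 : 0 ≤ A.r := A.hr
  have hc : 0 < C.r := lt_of_le_of_lt hR0 hrle
  obtain ⟨ζ, hζ0, hζ⟩ := exists_zeta A (A.u - A.r) Y hYfin
  -- main auxiliary : any admissible (s, ε) gives a contradiction
  have main : ∀ s ε : ℝ, 0 < s → s ≤ 1 → 0 < ε → ε ≤ C.r → 1 - Real.cos s ≤ ζ →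
      Real.cos s * (C.r - Real.sqrt (C.r^2 - ε^2)) + A.r * (1 - Real.cos s) < ε * Real.sin s →
      False := by
    intro s ε hs0 hs1 hε0 hεc hcosζ hfinal
    have hcos1 : Real.cos s ≤ 1 := Real.cos_le_one s
    have hcospos : (0:ℝ) < Real.cos s := by
      have := Real.one_sub_sq_div_two_le_cos (x := s)
      nlinarith
    have hlin : IsLinearMap ℝ (fun p : ℝ × ℝ => Real.cos s * p.1 - Real.sin s * p.2) := by
      constructor
      · intro x y; simp; ring
      · intro t x; simp; ring
    have h2 : convexHull ℝ (⋃ D ∈ Y, CC.pts D) ⊆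
        {p : ℝ × ℝ | Real.cos s * A.u - A.r ≤ Real.cos s * p.1 - Real.sin s * p.2} := by
      apply convexHull_min _ (convex_halfSpace_ge hlin (Real.cos s * A.u - A.r))
      intro p hp
      simp only [Set.mem_iUnion] at hp
      obtain ⟨D, hD, hpD⟩ := hp
      have hcent : D.r - A.r ≤ Real.cos s * D.u - Real.cos s * A.u := by
        rcases hle D hD with h | ⟨h, hr⟩
        · have h' : A.u - A.r < D.u - D.r := h
          rcases le_or_gt D.u A.u with hu | hu
          · nlinarith
          · have := hζ D hD h' hu
            nlinarith
        · have h' : A.u - A.r = D.u - D.r := h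
          nlinarith
      have hpD' : (p.1 - D.u)^2 + p.2^2 = D.r^2 := hpD
      have key : -D.r ≤ Real.cos s * (p.1 - D.u) - Real.sin s * p.2 := by
        nlinarith [sq_nonneg (Real.cos s * (p.1 - D.u) - Real.sin s * p.2 + D.r),
          sq_nonneg (Real.cos s * p.2 + Real.sin s * (p.1 - D.u)),
          Real.sin_sq_add_cos_sq s, D.hr]
      show Real.cos s * A.u - A.r ≤ Real.cos s * p.1 - Real.sin s * p.2
      nlinarith [key, hcent]
    have hσsq : (Real.sqrt (C.r^2 - ε^2))^2 = C.r^2 - ε^2 := Real.sq_sqrt (by nlinarith)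
    have hq : (((A.u - A.r) + (C.r - Real.sqrt (C.r^2 - ε^2)), ε) : ℝ × ℝ) ∈ C.pts := by
      show ((A.u - A.r) + (C.r - Real.sqrt (C.r^2 - ε^2)) - C.u)^2 + ε^2 = C.r^2
      have hx : (A.u - A.r) + (C.r - Real.sqrt (C.r^2 - ε^2)) - C.u
          = -Real.sqrt (C.r^2 - ε^2) := by rw [heq]; ring
      rw [hx]
      nlinarith
    have hH := h2 (hC hq)
    simp only [Set.mem_setOf_eq] at hH
    linarith [hH, hfinal]
  rcases eq_or_lt_of_le hR0 with hReq | hRpos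
  · -- A.r = 0
    set s := min 1 (Real.sqrt ζ) with hs
    have hs0 : 0 < s := lt_min one_pos (Real.sqrt_pos.mpr hζ0)
    have hs1 : s ≤ 1 := min_le_left _ _
    have hsζ : s^2 ≤ ζ := by
      have h1 : s ≤ Real.sqrt ζ := min_le_right _ _
      nlinarith [Real.sq_sqrt hζ0.le, hs0]
    have hsπ : s < Real.pi := by nlinarith [Real.pi_gt_three]
    have hsin0 : 0 < Real.sin s := Real.sin_pos_of_pos_of_lt_pi hs0 hsπ
    have hε0 : 0 < C.r * Real.sin s / 2 := by positivity
    have hεc : C.r * Real.sin s / 2 ≤ C.r := by nlinarith [Real.sin_le_one s]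
    apply main s (C.r * Real.sin s / 2) hs0 hs1 hε0 hεc
    · nlinarith [Real.one_sub_sq_div_two_le_cos (x := s)]
    · -- final inequality, with A.r = 0
      rw [← hReq]
      have hδc := sub_sqrt_mul_le C.r (C.r * Real.sin s / 2) hc hε0 hεc
      have hσle := sqrt_le_c C.r (C.r * Real.sin s / 2) hc hε0 hεc
      have hcos1 : Real.cos s ≤ 1 := Real.cos_le_one s
      have hδ0 : 0 ≤ C.r - Real.sqrt (C.r^2 - (C.r * Real.sin s / 2)^2) := by linarith
      -- δ * c ≤ δ * (2c - ε) ≤ ε²,  cos δ ≤ δ, and ε² < c ε sin s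
      have h3 : (C.r - Real.sqrt (C.r^2 - (C.r * Real.sin s / 2)^2)) * C.r
          ≤ (C.r * Real.sin s / 2)^2 := by nlinarith
      nlinarith [Real.sin_le_one s, mul_le_mul_of_nonneg_right hcos1 hδ0]
  · -- A.r > 0
    set s := min (min 1 ((C.r - A.r)/A.r))
        (min (Real.sqrt ((C.r - A.r)/(C.r + A.r))) (Real.sqrt ζ)) with hs
    have hcmR : 0 < C.r - A.r := by linarith
    have hcpR : 0 < C.r + A.r := by linarith
    have hs0 : 0 < s :=
      lt_min (lt_min one_pos (div_pos hcmR hRpos))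
        (lt_min (Real.sqrt_pos.mpr (div_pos hcmR hcpR)) (Real.sqrt_pos.mpr hζ0))
    have hs1 : s ≤ 1 := le_trans (min_le_left _ _) (min_le_left _ _)
    have hsζ : s^2 ≤ ζ := by
      have h1 : s ≤ Real.sqrt ζ := le_trans (min_le_right _ _) (min_le_right _ _)
      nlinarith [Real.sq_sqrt hζ0.le, hs0]
    have hsC : s^2 * (C.r + A.r) ≤ C.r - A.r := by
      have h1 : s ≤ Real.sqrt ((C.r - A.r)/(C.r + A.r)) :=
        le_trans (min_le_right _ _) (min_le_left _ _)
      have h2 : (Real.sqrt ((C.r - A.r)/(C.r + A.r)))^2 = (C.r - A.r)/(C.r + A.r) :=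
        Real.sq_sqrt (by positivity)
      have h3 : s^2 ≤ (C.r - A.r)/(C.r + A.r) := by nlinarith [hs0]
      calc s^2 * (C.r + A.r) ≤ (C.r - A.r)/(C.r + A.r) * (C.r + A.r) :=
            mul_le_mul_of_nonneg_right h3 hcpR.le
        _ = C.r - A.r := div_mul_cancel₀ _ (ne_of_gt hcpR)
    have hεRs : A.r * s ≤ C.r - A.r := by
      have h1 : s ≤ (C.r - A.r)/A.r := le_trans (min_le_left _ _) (min_le_right _ _)
      calc A.r * s ≤ A.r * ((C.r - A.r)/A.r) := mul_le_mul_of_nonneg_left h1 hR0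
        _ = C.r - A.r := mul_div_cancel₀ _ (ne_of_gt hRpos)
    have hε0 : 0 < A.r * s := mul_pos hRpos hs0
    have hεc : A.r * s ≤ C.r := by linarith
    apply main s (A.r * s) hs0 hs1 hε0 hεc
    · nlinarith [Real.one_sub_sq_div_two_le_cos (x := s)]
    · -- final inequality
      have hδc := sub_sqrt_mul_le C.r (A.r * s) hc hε0 hεc
      have hσle := sqrt_le_c C.r (A.r * s) hc hε0 hεc
      have hcos1 : Real.cos s ≤ 1 := Real.cos_le_one s
      have hcossq : 1 - s^2/2 ≤ Real.cos s := Real.one_sub_sq_div_two_le_cos (x := s)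
      have hsin : s - s^3/4 < Real.sin s := lt_of_le_of_lt (by linarith [pow_pos hs0 3]) (Real.sin_gt_sub_cube hs0)
      have hδ0 : 0 ≤ C.r - Real.sqrt (C.r^2 - (A.r * s)^2) := by linarith
      -- δ * (c + R) ≤ δ * (2c - Rs) ≤ R² s²
      have h7 : (C.r - Real.sqrt (C.r^2 - (A.r * s)^2)) * (C.r + A.r) ≤ A.r^2 * s^2 := by
        nlinarith [mul_le_mul_of_nonneg_left
          (show C.r + A.r ≤ 2*C.r - A.r * s by linarith) hδ0]
      -- cos s * δ * (c+R) ≤ R² s²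
      have h8 : Real.cos s * (C.r - Real.sqrt (C.r^2 - (A.r * s)^2)) * (C.r + A.r)
          ≤ A.r^2 * s^2 := by
        nlinarith [mul_le_mul_of_nonneg_right hcos1 (mul_nonneg hδ0 hcpR.le)]
      -- multiply goal through by (c + R) > 0
      rw [show Real.cos s * (C.r - Real.sqrt (C.r^2 - (A.r*s)^2)) + A.r * (1 - Real.cos s)
            < A.r * s * Real.sin s
          ↔ (Real.cos s * (C.r - Real.sqrt (C.r^2 - (A.r*s)^2)) + A.r * (1 - Real.cos s))
              * (C.r + A.r) < (A.r * s * Real.sin s) * (C.r + A.r)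
          from (mul_lt_mul_iff_of_pos_right hcpR).symm]
      have h9 : A.r * s * (s - s^3/4) * (C.r + A.r) < A.r * s * Real.sin s * (C.r + A.r) := by
        apply mul_lt_mul_of_pos_right _ hcpR
        exact mul_lt_mul_of_pos_left hsin hε0
      have h10 : A.r * (1 - Real.cos s) * (C.r + A.r) ≤ A.r * (s^2/2) * (C.r + A.r) := by
        apply mul_le_mul_of_nonneg_right _ hcpR.le
        apply mul_le_mul_of_nonneg_left _ hR0
        linarith
      have h11 : (s^2 * (C.r + A.r)) * (A.r * s^2 / 4) ≤ (C.r - A.r) * (A.r * s^2 / 4) := by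
        apply mul_le_mul_of_nonneg_right hsC
        positivity
      nlinarith [h8, h9, h10, h11, mul_pos (mul_pos hRpos (mul_pos hs0 hs0)) hcmR]

def CC.flip (C : CC) : CC := ⟨-C.u, C.r, C.hr⟩

noncomputable def negFst : (ℝ × ℝ) →ₗ[ℝ] (ℝ × ℝ) :=
  LinearMap.prod (-(LinearMap.fst ℝ ℝ ℝ)) (LinearMap.snd ℝ ℝ ℝ)

lemma negFst_apply (p : ℝ × ℝ) : negFst p = (-p.1, p.2) := rfl

lemma flip_pts (C : CC) : C.flip.pts = negFst '' C.pts := by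
  ext p
  constructor
  · intro hp
    have hp' : (p.1 - C.flip.u)^2 + p.2^2 = C.flip.r^2 := hp
    refine ⟨(-p.1, p.2), ?_, ?_⟩
    · show (-p.1 - C.u)^2 + p.2^2 = C.r^2
      simp only [CC.flip] at hp'
      linear_combination hp'
    · rw [negFst_apply]; simp
  · rintro ⟨q, hq, rfl⟩
    have hq' : (q.1 - C.u)^2 + q.2^2 = C.r^2 := hq
    show ((negFst q).1 - C.flip.u)^2 + (negFst q).2^2 = C.flip.r^2
    rw [negFst_apply]
    simp only [CC.flip]
    linear_combination hq'

lemma keyR (B C : CC) (Y : Set CC) (hYfin : Y.Finite)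
    (hle : ∀ D ∈ Y, rendLe D B)
    (hC : C.pts ⊆ convexHull ℝ (⋃ D ∈ Y, CC.pts D)) : rendLe C B := by
  have h : lendLe B.flip C.flip := by
    apply keyL B.flip C.flip (CC.flip '' Y) (hYfin.image _)
    · rintro _ ⟨D, hD, rfl⟩
      rcases hle D hD with h | ⟨h1, h2⟩
      · left
        show B.flip.u - B.flip.r < D.flip.u - D.flip.r
        simp only [CC.flip]
        have : D.u + D.r < B.u + B.r := h
        linarith
      · right
        constructor
        · show B.flip.u - B.flip.r = D.flip.u - D.flip.r
          simp only [CC.flip]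
          have : D.u + D.r = B.u + B.r := h1
          linarith
        · exact h2
    · rw [flip_pts]
      calc negFst '' C.pts ⊆ negFst '' (convexHull ℝ (⋃ D ∈ Y, CC.pts D)) :=
            Set.image_mono hC
        _ = convexHull ℝ (negFst '' ⋃ D ∈ Y, CC.pts D) := negFst.image_convexHull _
        _ = convexHull ℝ (⋃ D ∈ CC.flip '' Y, CC.pts D) := by
            congr 1
            rw [Set.image_iUnion₂]
            rw [Set.biUnion_image]
            exact Set.iUnion₂_congr fun D _ => (flip_pts D).symm
  rcases h with h | ⟨h1, h2⟩
  · left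
    have : B.flip.u - B.flip.r < C.flip.u - C.flip.r := h
    simp only [CC.flip] at this
    show C.u + C.r < B.u + B.r
    linarith
  · right
    constructor
    · have : B.flip.u - B.flip.r = C.flip.u - C.flip.r := h1
      simp only [CC.flip] at this
      show C.u + C.r = B.u + B.r
      linarith
    · exact h2

/-- For a finite concave set `F` of collinear circles, every nonempty
closed set `X` equals `[A,B]` where `A ∈ X` has least left end and `B ∈ X` has greatest
right end in `X`; consequently the closed sets are exactly `{∅} ∪ {[A,B] : A, B ∈ F}`. -/
theorem stmt4 (F : Set CC) (hF : F.Finite) (hconc : ConcaveF F) :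
    (∀ X : Set CC, X ⊆ F → ch F X = X → X.Nonempty →
      ∀ A ∈ X, (∀ C ∈ X, lendLe A C) → ∀ B ∈ X, (∀ C ∈ X, rendLe C B) →
        X = hInt F A B) ∧
    {X : Set CC | X ⊆ F ∧ ch F X = X} =
      insert (∅ : Set CC) {Y : Set CC | ∃ A ∈ F, ∃ B ∈ F, Y = hInt F A B} := by
  have part1 : ∀ X : Set CC, X ⊆ F → ch F X = X → X.Nonempty →
      ∀ A ∈ X, (∀ C ∈ X, lendLe A C) → ∀ B ∈ X, (∀ C ∈ X, rendLe C B) →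
        X = hInt F A B := by
    intro X hXF hcl hne A hA hAmin B hB hBmax
    apply Set.eq_of_subset_of_subset
    · intro C hC
      exact ⟨hXF hC, hAmin C hC, hBmax C hC⟩
    · rintro C ⟨hCF, hAC, hCB⟩
      rw [← hcl]
      refine ⟨hCF, ?_⟩
      refine (hconc A (hXF hA) C hCF B (hXF hB) hAC hCB).trans (convexHull_mono ?_)
      rintro p (h | h)
      · exact Set.mem_biUnion hA h
      · exact Set.mem_biUnion hB h
  refine ⟨part1, ?_⟩
  apply Set.eq_of_subset_of_subset
  · rintro X ⟨hXF, hcl⟩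
    rcases X.eq_empty_or_nonempty with h | hne
    · exact Set.mem_insert_iff.mpr (Or.inl h)
    apply Set.mem_insert_iff.mpr
    right
    obtain ⟨A, hA, hAmin⟩ :=
      Set.exists_min_image X (fun C => toLex (C.lmpt, -C.r)) (hF.subset hXF) hne
    obtain ⟨B, hB, hBmax⟩ :=
      Set.exists_min_image X (fun C => toLex (-C.rmpt, -C.r)) (hF.subset hXF) hne
    have hAmin' : ∀ C ∈ X, lendLe A C := by
      intro C hC
      have h := hAmin C hC
      rw [Prod.Lex.le_iff] at h
      rcases h with h | ⟨h1, h2⟩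
      · exact Or.inl h
      · exact Or.inr ⟨h1, by simpa using h2⟩
    have hBmax' : ∀ C ∈ X, rendLe C B := by
      intro C hC
      have h := hBmax C hC
      rw [Prod.Lex.le_iff] at h
      rcases h with h | ⟨h1, h2⟩
      · exact Or.inl (by simpa using h)
      · refine Or.inr ⟨(neg_inj.mp h1).symm, by simpa using h2⟩
    exact ⟨A, hXF hA, B, hXF hB, part1 X hXF hcl hne A hA hAmin' B hB hBmax'⟩
  · rintro X hX
    rcases Set.mem_insert_iff.mp hX with rfl | ⟨A, hAF, B, hBF, rfl⟩
    · refine ⟨Set.empty_subset _, ?_⟩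
      apply Set.eq_of_subset_of_subset
      · rintro C ⟨hCF, hCpts⟩
        exfalso
        have := hCpts C.right_mem_pts
        simp at this
      · exact Set.empty_subset _
    · refine ⟨fun C hC => hC.1, ?_⟩
      apply Set.eq_of_subset_of_subset
      · rintro C ⟨hCF, hCpts⟩
        exact ⟨hCF,
          keyL A C (hInt F A B) (hF.subset fun D hD => hD.1) (fun D hD => hD.2.1) hCpts,
          keyR B C (hInt F A B) (hF.subset fun D hD => hD.1) (fun D hD => hD.2.2) hCpts⟩
      · rintro C hC
        exact ⟨hC.1,
          (Set.subset_biUnion_of_mem (u := fun D => CC.pts D) hC).trans (subset_convexHull ℝ _)⟩
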